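/- If (S_n)_{n∈ℕ} is a countable family of subsets of ℕ, each of density one, then there exists a single set S ⊆ ℕ of density one such that for each n, S \ S_n is finite, i.e. S is eventually contained in every S_n. -/

import Mathlib

open Filter Topology
open scoped Classical

/-- A set `S ⊆ ℕ` has density one. -/
def DensityOne (S : Set ℕ) : Prop :=
  Tendsto (fun N : ℕ => (((Finset.Icc 1 N).filter (fun j => j ∈ S)).card : ℝ) / N)
    atTop (𝓝 1)

lemma count_le (p : ℕ → Prop) (N : ℕ) : ((Finset.Icc 1 N).filter p).card ≤ N := by
  calc ((Finset.Icc 1 N).filter p).card ≤ (Finset.Icc 1 N).card := Finset.card_filter_le _ _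
  _ = N := by simp

lemma densityOne_inter {A B : Set ℕ} (hA : DensityOne A) (hB : DensityOne B) :
    DensityOne (A ∩ B) := by
  have key : ∀ N : ℕ,
      ((Finset.Icc 1 N).filter (fun j => j ∈ A)).card
      + ((Finset.Icc 1 N).filter (fun j => j ∈ B)).card
      ≤ ((Finset.Icc 1 N).filter (fun j => j ∈ A ∩ B)).card + N := by
    intro N
    have h1 : ((Finset.Icc 1 N).filter (fun j => j ∈ A)
        ∪ (Finset.Icc 1 N).filter (fun j => j ∈ B)).card
        + ((Finset.Icc 1 N).filter (fun j => j ∈ A)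
        ∩ (Finset.Icc 1 N).filter (fun j => j ∈ B)).card
        = ((Finset.Icc 1 N).filter (fun j => j ∈ A)).card
        + ((Finset.Icc 1 N).filter (fun j => j ∈ B)).card :=
      Finset.card_union_add_card_inter _ _
    have h2 : (Finset.Icc 1 N).filter (fun j => j ∈ A)
        ∩ (Finset.Icc 1 N).filter (fun j => j ∈ B)
        = (Finset.Icc 1 N).filter (fun j => j ∈ A ∩ B) := by
      rw [← Finset.filter_and]; simp [Set.mem_inter_iff]
    have h3 : ((Finset.Icc 1 N).filter (fun j => j ∈ A)
        ∪ (Finset.Icc 1 N).filter (fun j => j ∈ B)).card ≤ N := by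
      calc _ ≤ (Finset.Icc 1 N).card := Finset.card_le_card (by
              apply Finset.union_subset <;> exact Finset.filter_subset _ _)
      _ = N := by simp
    rw [h2] at h1; omega
  have hupper : ∀ N : ℕ,
      (((Finset.Icc 1 N).filter (fun j => j ∈ A ∩ B)).card : ℝ) / N
      ≤ (((Finset.Icc 1 N).filter (fun j => j ∈ A)).card : ℝ) / N := by
    intro N
    rcases Nat.eq_zero_or_pos N with rfl | hN
    · norm_num
    · have hN' : (0:ℝ) < N := by exact_mod_cast hN
      gcongr
      intro x hx
      exact hx.1
  have hlower : ∀ N : ℕ,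
      (((Finset.Icc 1 N).filter (fun j => j ∈ A)).card : ℝ) / N
      + (((Finset.Icc 1 N).filter (fun j => j ∈ B)).card : ℝ) / N - 1
      ≤ (((Finset.Icc 1 N).filter (fun j => j ∈ A ∩ B)).card : ℝ) / N := by
    intro N
    rcases Nat.eq_zero_or_pos N with rfl | hN
    · norm_num
    · have hN' : (0:ℝ) < N := by exact_mod_cast hN
      have h' : (((Finset.Icc 1 N).filter (fun j => j ∈ A)).card : ℝ)
          + ((Finset.Icc 1 N).filter (fun j => j ∈ B)).card
          ≤ (((Finset.Icc 1 N).filter (fun j => j ∈ A ∩ B)).card : ℝ) + N := by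
        exact_mod_cast key N
      calc (((Finset.Icc 1 N).filter (fun j => j ∈ A)).card : ℝ) / N
            + (((Finset.Icc 1 N).filter (fun j => j ∈ B)).card : ℝ) / N - 1
          = ((((Finset.Icc 1 N).filter (fun j => j ∈ A)).card : ℝ)
            + (((Finset.Icc 1 N).filter (fun j => j ∈ B)).card : ℝ)) / N - 1 := by ring
        _ ≤ ((((Finset.Icc 1 N).filter (fun j => j ∈ A ∩ B)).card : ℝ) + N) / N - 1 := by
            gcongr
        _ = (((Finset.Icc 1 N).filter (fun j => j ∈ A ∩ B)).card : ℝ) / N := by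
            field_simp
            ring
  have hlo : Tendsto (fun N : ℕ =>
      (((Finset.Icc 1 N).filter (fun j => j ∈ A)).card : ℝ) / N
      + (((Finset.Icc 1 N).filter (fun j => j ∈ B)).card : ℝ) / N - 1) atTop (𝓝 1) := by
    have := (hA.add hB).sub (tendsto_const_nhds (x := (1:ℝ)))
    simpa using this
  have := tendsto_of_tendsto_of_tendsto_of_le_of_le' hlo hA
    (Eventually.of_forall hlower) (Eventually.of_forall hupper)
  exact this.congr (fun N => by congr)

theorem stmt_1 (S : ℕ → Set ℕ) (hS : ∀ n, DensityOne (S n)) :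
    ∃ T : Set ℕ, DensityOne T ∧ ∀ n, (T \ S n).Finite := by
  -- the decreasing intersections
  obtain ⟨A, hAd, hAanti, hAS⟩ : ∃ A : ℕ → Set ℕ, (∀ k, DensityOne (A k)) ∧
      (∀ k l, k ≤ l → A l ⊆ A k) ∧ (∀ k, A k ⊆ S k) := by
    refine ⟨fun k => ⋂ i ∈ Finset.range (k+1), S i, ?_, ?_, ?_⟩
    · intro k
      induction k with
      | zero => simpa using hS 0
      | succ k ih =>
        have heq : (⋂ i ∈ Finset.range (k+2), S i)
            = S (k+1) ∩ ⋂ i ∈ Finset.range (k+1), S i := by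
          rw [Finset.range_add_one, Finset.set_biInter_insert]
        show DensityOne (⋂ i ∈ Finset.range (k+2), S i)
        rw [heq]
        exact densityOne_inter (hS (k+1)) ih
    · intro k l hkl x hx
      simp only [Set.mem_iInter, Finset.mem_range] at hx ⊢
      intro i hi
      exact hx i (by omega)
    · intro k x hx
      simp only [Set.mem_iInter, Finset.mem_range] at hx
      exact hx k (by omega)
  -- choose thresholds
  have hM : ∀ k : ℕ, ∃ M : ℕ, ∀ N ≥ M,
      1 - 1/((k:ℝ)+1) < (((Finset.Icc 1 N).filter (fun j => j ∈ A k)).card : ℝ) / N := by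
    intro k
    have h1 : (1 : ℝ) - 1/((k:ℝ)+1) < 1 := by
      have : (0:ℝ) < 1/((k:ℝ)+1) := by positivity
      linarith
    have := (hAd k).eventually (eventually_gt_nhds h1)
    exact eventually_atTop.mp this
  choose M hMspec using hM
  -- the cut points
  set Nseq : ℕ → ℕ := fun k => Nat.rec (M 0) (fun k ih => max (ih+1) (M (k+1))) k with hNseq
  have hNM : ∀ k, M k ≤ Nseq k := by
    intro k; cases k with
    | zero => exact le_refl _
    | succ k => exact le_max_right _ _
  have hNmono : StrictMono Nseq := by
    apply strictMono_nat_of_lt_succ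
    intro k
    exact lt_of_lt_of_le (Nat.lt_succ_self _) (le_max_left _ _)
  refine ⟨⋃ k, A k ∩ Set.Ioc (Nseq k) (Nseq (k+1)), ?_, ?_⟩
  · -- density one
    set T : Set ℕ := ⋃ k, A k ∩ Set.Ioc (Nseq k) (Nseq (k+1)) with hT
    have hmemT : ∀ k N, N ≤ Nseq (k+1) → ∀ j, j ∈ A k → Nseq 0 < j → j ≤ N → j ∈ T := by
      intro k N hN2 j hjA hj0 hjN
      obtain ⟨m, hmk, hmlt, hjle⟩ : ∃ m, m ≤ k ∧ Nseq m < j ∧ j ≤ Nseq (m+1) := by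
        refine ⟨Nat.findGreatest (fun i => Nseq i < j) k, Nat.findGreatest_le k,
          Nat.findGreatest_spec (P := fun i => Nseq i < j) (Nat.zero_le k) hj0, ?_⟩
        rcases eq_or_lt_of_le (Nat.findGreatest_le (P := fun i => Nseq i < j) k) with heq | hlt
        · rw [heq]; exact hjN.trans hN2
        · have hng : ¬ Nseq (Nat.findGreatest (fun i => Nseq i < j) k + 1) < j :=
            Nat.findGreatest_is_greatest (P := fun i => Nseq i < j) (n := k)
              (k := Nat.findGreatest (fun i => Nseq i < j) k + 1) (Nat.lt_succ_self _) hlt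
          omega
      exact Set.mem_iUnion.mpr ⟨m, hAanti m k hmk hjA, hmlt, hjle⟩
    have hcount : ∀ k N, N ≤ Nseq (k+1) →
        ((Finset.Icc 1 N).filter (fun j => j ∈ A k)).card
        ≤ ((Finset.Icc 1 N).filter (fun j => j ∈ T)).card + Nseq 0 := by
      intro k N hN2
      have hsub : (Finset.Icc 1 N).filter (fun j => j ∈ A k)
          ⊆ ((Finset.Icc 1 N).filter (fun j => j ∈ T)) ∪ Finset.Icc 1 (Nseq 0) := by
        intro j hj
        simp only [Finset.mem_filter, Finset.mem_union, Finset.mem_Icc] at hj ⊢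
        rcases le_or_gt j (Nseq 0) with h | h
        · exact Or.inr ⟨hj.1.1, h⟩
        · exact Or.inl ⟨hj.1, hmemT k N hN2 j hj.2 h hj.1.2⟩
      calc ((Finset.Icc 1 N).filter (fun j => j ∈ A k)).card
          ≤ (((Finset.Icc 1 N).filter (fun j => j ∈ T)) ∪ Finset.Icc 1 (Nseq 0)).card :=
            Finset.card_le_card hsub
        _ ≤ ((Finset.Icc 1 N).filter (fun j => j ∈ T)).card + (Finset.Icc 1 (Nseq 0)).card :=
            Finset.card_union_le _ _
        _ = ((Finset.Icc 1 N).filter (fun j => j ∈ T)).card + Nseq 0 := by simp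
    have hub : ∀ N : ℕ, (((Finset.Icc 1 N).filter (fun j => j ∈ T)).card : ℝ) / N ≤ 1 := by
      intro N
      rcases Nat.eq_zero_or_pos N with rfl | hN
      · norm_num
      · rw [div_le_one (by exact_mod_cast hN)]
        exact_mod_cast count_le _ N
    show Tendsto (fun N : ℕ =>
        (((Finset.Icc 1 N).filter (fun j => j ∈ T)).card : ℝ) / N) atTop (𝓝 1)
    rw [Metric.tendsto_atTop]
    intro ε hε
    obtain ⟨k0, hk0⟩ := exists_nat_one_div_lt (show (0:ℝ) < ε/3 by linarith)
    have h0 : Tendsto (fun N : ℕ => (Nseq 0 : ℝ)/N) atTop (𝓝 0) :=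
      tendsto_const_div_atTop_nhds_zero_nat _
    obtain ⟨M', hM'⟩ := eventually_atTop.mp
      (h0.eventually (eventually_lt_nhds (show (0:ℝ) < ε/3 by linarith)))
    refine ⟨max M' (Nseq k0 + 1), ?_⟩
    intro N hN
    have hN1 : Nseq k0 < N := lt_of_lt_of_le (Nat.lt_succ_self _) (le_trans (le_max_right _ _) hN)
    have hNM' : M' ≤ N := le_trans (le_max_left _ _) hN
    have hP0 : Nseq 0 < N := lt_of_le_of_lt (hNmono.monotone (Nat.zero_le _)) hN1
    obtain ⟨k, hkN, hNk1⟩ : ∃ k, Nseq k < N ∧ N ≤ Nseq (k+1) := by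
      refine ⟨Nat.findGreatest (fun i => Nseq i < N) N,
        Nat.findGreatest_spec (P := fun i => Nseq i < N) (Nat.zero_le N) hP0, ?_⟩
      have hkub : Nat.findGreatest (fun i => Nseq i < N) N < N :=
        lt_of_le_of_lt hNmono.le_apply (Nat.findGreatest_spec (P := fun i => Nseq i < N) (Nat.zero_le N) hP0)
      by_contra h
      push_neg at h
      exact Nat.findGreatest_is_greatest (P := fun i => Nseq i < N) (n := N)
        (k := Nat.findGreatest (fun i => Nseq i < N) N + 1) (Nat.lt_succ_self _) (by omega) h
    have hk0k : k0 ≤ k := by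
      by_contra h
      push_neg at h
      have h2 : Nseq (k+1) ≤ Nseq k0 := hNmono.monotone (show k+1 ≤ k0 by omega)
      omega
    have hNpos : 0 < N := lt_of_le_of_lt (Nat.zero_le _) hkN
    have hNR : (0:ℝ) < N := by exact_mod_cast hNpos
    have hAk := hMspec k N (le_trans (hNM k) (le_of_lt hkN))
    have hcntR : (((Finset.Icc 1 N).filter (fun j => j ∈ A k)).card : ℝ)
        ≤ (((Finset.Icc 1 N).filter (fun j => j ∈ T)).card : ℝ) + Nseq 0 := by
      exact_mod_cast hcount k N hNk1
    have hTlow : 1 - 1/((k:ℝ)+1) - (Nseq 0 : ℝ)/N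
        < (((Finset.Icc 1 N).filter (fun j => j ∈ T)).card : ℝ)/N := by
      have h2 : (((Finset.Icc 1 N).filter (fun j => j ∈ A k)).card : ℝ)/N
          ≤ ((((Finset.Icc 1 N).filter (fun j => j ∈ T)).card : ℝ) + Nseq 0)/N := by
        gcongr
      rw [add_div] at h2
      linarith
    have hub' := hub N
    have h1k : 1/((k:ℝ)+1) ≤ 1/((k0:ℝ)+1) := by
      apply one_div_le_one_div_of_le (by positivity)
      have : (k0:ℝ) ≤ (k:ℝ) := by exact_mod_cast hk0k
      linarith
    have hsmall := hM' N hNM'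
    rw [Real.dist_eq, abs_sub_comm, abs_of_nonneg (by linarith)]
    linarith
  · -- finiteness
    intro n
    apply (Set.finite_Iic (Nseq n)).subset
    rintro j ⟨hjT, hjS⟩
    obtain ⟨k, hk⟩ := Set.mem_iUnion.mp hjT
    obtain ⟨hjA, hj1, hj2⟩ := hk
    have hkn : k < n := by
      by_contra h
      push_neg at h
      exact hjS (hAS n (hAanti n k h hjA))
    exact le_trans hj2 (hNmono.monotone (show k+1 ≤ n by omega))
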